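/- Let n ≥ 1 be an integer, set j₀ = (n−1)/2 and φ_a(z) = e^{2πi(a−j₀)z} for a ∈ ℤ. Let α, β, λ, κ ∈ ℂ with sin(πλ) ≠ 0 and sin(πκ) ≠ 0, and set q = e^{πiκ}, η = e^{πiλ}, ζ = e^{2πiαλ}, γ = e^{2πiβ}, q̂ = q − q⁻¹, η̂ = η − η⁻¹, and G_t(z,μ) = π·sin(π(z+μ))/(sin(πz)·sin(πμ)). Then for all i, j ∈ {0,…,n−1} and all (z₁,z₂) ∈ ℂ² with sin(π(z₁−z₂−2(αλ+β))) ≠ 0: G_t(z₁−z₂−2(αλ+β), λ)·φ_i(z₂+2αλ)·φ_j(z₁−2αλ) − G_t(z₁−z₂−2(αλ+β), κ)·φ_i(z₁−2β)·φ_j(z₂+2β) = ∑_{k,l=0}^{n−1} c_{ij}^{kl}·φ_k(z₁)·φ_l(z₂), where c_{ij}^{kl} = (2πi/(q̂·η̂))·ζ^{2(i−k)}·γ^{2(j−k)} times: (qη⁻¹ − q⁻¹η) if i=j=k=l; −η̂·q^{sgn(i−j)} if i=k ≠ j=l; q̂·η^{sgn(j−i)} if j=k ≠ i=l; sgn(j−i)·q̂·η̂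 if i+j=k+l and min(i,j) < k < max(i,j); and 0 otherwise (sgn(x) = ±1 according to the sign of x). (That is, the twisted trigonometric Shibukawa–Ueno operator preserves V^t_n ⊗ V^t_n with matrix coefficients equal to the twisted affinized Cremmer–Gervais R-matrix.) -/

import Mathlib

open Complex

/-- `G_t(z,μ) = π sin(π(z+μ))/(sin(πz) sin(πμ))`. -/
noncomputable def Gtrig (z μ : ℂ) : ℂ :=
  (Real.pi : ℂ) * Complex.sin ((Real.pi : ℂ) * (z + μ)) /
    (Complex.sin ((Real.pi : ℂ) * z) * Complex.sin ((Real.pi : ℂ) * μ))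

/-- The trigonometric basis function `φ_a(z) = e^{2πi(a−(n−1)/2)z}`. -/
noncomputable def phiT (n : ℕ) (a : ℤ) (z : ℂ) : ℂ :=
  Complex.exp (2 * (Real.pi : ℂ) * Complex.I * ((a : ℂ) - ((n : ℂ) - 1) / 2) * z)

/-- The entry `c_{ij}^{kl}` of the twisted affinized Cremmer–Gervais matrix,
including the prefactor `(2πi/(q̂η̂))ζ^{2(i−k)}γ^{2(j−k)}`. -/
noncomputable def cgTwCoeff {n : ℕ} (q η ζ γ : ℂ) (i j k l : Fin n) : ℂ :=
  2 * (Real.pi : ℂ) * Complex.I / ((q - q⁻¹) * (η - η⁻¹)) *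
  ζ ^ (2 * ((i : ℤ) - (k : ℤ))) * γ ^ (2 * ((j : ℤ) - (k : ℤ))) *
  (if i = j ∧ j = k ∧ k = l then q * η⁻¹ - q⁻¹ * η
   else if i = k ∧ j = l ∧ i ≠ j then
     -(η - η⁻¹) * (if (j : ℤ) < (i : ℤ) then q else q⁻¹)
   else if j = k ∧ i = l ∧ i ≠ j then
     (q - q⁻¹) * (if (i : ℤ) < (j : ℤ) then η else η⁻¹)
   else if (i : ℤ) + (j : ℤ) = (k : ℤ) + (l : ℤ) ∧
       min (i : ℤ) (j : ℤ) < (k : ℤ) ∧ (k : ℤ) < max (i : ℤ) (j : ℤ) then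
     (if (i : ℤ) < (j : ℤ) then 1 else -1) * (q - q⁻¹) * (η - η⁻¹)
   else 0)
open Complex Finset
set_option maxHeartbeats 2000000

noncomputable def Ee (x : ℂ) : ℂ := Complex.exp ((Real.pi : ℂ) * Complex.I * x)

lemma Ee_ne (x : ℂ) : Ee x ≠ 0 := Complex.exp_ne_zero _

lemma Ee_add (x y : ℂ) : Ee (x + y) = Ee x * Ee y := by
  rw [Ee, Ee, Ee, ← Complex.exp_add]; congr 1; ring

lemma Ee_sub (x y : ℂ) : Ee (x - y) = Ee x * (Ee y)⁻¹ := by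
  rw [Ee, Ee, Ee, ← Complex.exp_neg, ← Complex.exp_add]; congr 1; ring

lemma sin_pi_eq (x : ℂ) : Complex.sin ((Real.pi:ℂ) * x) = ((Ee x)⁻¹ - Ee x) * Complex.I / 2 := by
  show (Complex.exp _ - Complex.exp _) * Complex.I / 2 = _
  rw [Ee, ← Complex.exp_neg]
  congr 3
  · congr 1; ring
  · congr 1; ring

lemma sin_ne_imp (x : ℂ) (h : Complex.sin ((Real.pi:ℂ) * x) ≠ 0) : Ee x - (Ee x)⁻¹ ≠ 0 := by
  rw [sin_pi_eq] at h
  intro h2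
  apply h
  rw [show (Ee x)⁻¹ - Ee x = -(Ee x - (Ee x)⁻¹) by ring, h2]
  ring

lemma phiT_eq (n : ℕ) (a : ℤ) (z : ℂ) :
    phiT n a z = (Ee z) ^ (2 * a - (n : ℤ) + 1) := by
  rw [phiT, Ee, ← Complex.exp_int_mul]
  congr 1
  push_cast
  ring

lemma Gtrig_eq (x μ : ℂ) (hx : Complex.sin ((Real.pi:ℂ) * x) ≠ 0)
    (hμ : Complex.sin ((Real.pi:ℂ) * μ) ≠ 0) :
    Gtrig x μ = 2 * (Real.pi:ℂ) * Complex.I * (Ee x * Ee μ - (Ee x)⁻¹ * (Ee μ)⁻¹) /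
      ((Ee x - (Ee x)⁻¹) * (Ee μ - (Ee μ)⁻¹)) := by
  have hX := Ee_ne x
  have hM := Ee_ne μ
  have h1 := sin_ne_imp x hx
  have h2 := sin_ne_imp μ hμ
  rw [Gtrig, sin_pi_eq (x+μ), sin_pi_eq x, sin_pi_eq μ, Ee_add]
  have hI := Complex.I_ne_zero
  have hd1 : ((Ee x)⁻¹ - Ee x) * Complex.I / 2 * (((Ee μ)⁻¹ - Ee μ) * Complex.I / 2) ≠ 0 := by
    apply mul_ne_zero <;> · 
      apply div_ne_zero _ two_ne_zero
      apply mul_ne_zero _ hI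
      intro h0
      first
      | exact h1 (by rw [show Ee x - (Ee x)⁻¹ = -((Ee x)⁻¹ - Ee x) by ring, h0]; ring)
      | exact h2 (by rw [show Ee μ - (Ee μ)⁻¹ = -((Ee μ)⁻¹ - Ee μ) by ring, h0]; ring)
  have hd2 : (Ee x - (Ee x)⁻¹) * (Ee μ - (Ee μ)⁻¹) ≠ 0 := mul_ne_zero h1 h2
  rw [div_eq_div_iff hd1 hd2]
  linear_combination (-(Real.pi:ℂ) * Complex.I * (Ee x * Ee μ - (Ee x)⁻¹ * (Ee μ)⁻¹) * ((Ee x - (Ee x)⁻¹) * (Ee μ - (Ee μ)⁻¹)) / 2) * Complex.I_sq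

lemma coreFrac (A q η : ℂ) (hA : A ≠ 0) (hq : q ≠ 0) (hη : η ≠ 0)
    (hAA : A - A⁻¹ ≠ 0) (hqq : q - q⁻¹ ≠ 0) (hηη : η - η⁻¹ ≠ 0) (s : ℕ) :
    (A*η - A⁻¹*η⁻¹)/((A-A⁻¹)*(η-η⁻¹)) * (A^2)^(s+1) - (A*q - A⁻¹*q⁻¹)/((A-A⁻¹)*(q-q⁻¹))
    = (1/((q-q⁻¹)*(η-η⁻¹))) * ( -(η-η⁻¹)*q⁻¹ + (q-q⁻¹)*η*(A^2)^(s+1)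
        + (q-q⁻¹)*(η-η⁻¹) * ∑ t ∈ Finset.range s, (A^2)^(1+t) ) := by
  induction s with
  | zero =>
    rw [Finset.sum_range_zero, one_div_mul_eq_div, div_mul_eq_mul_div,
      div_sub_div _ _ (mul_ne_zero hAA hηη) (mul_ne_zero hAA hqq),
      div_eq_div_iff (mul_ne_zero (mul_ne_zero hAA hηη) (mul_ne_zero hAA hqq)) (mul_ne_zero hqq hηη)]
    field_simp
    ring
  | succ s IH =>
    rw [Finset.sum_range_succ]
    have hstep : (A*η - A⁻¹*η⁻¹)/((A-A⁻¹)*(η-η⁻¹)) * ((A^2)^(s+1+1) - (A^2)^(s+1))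
        = (1/((q-q⁻¹)*(η-η⁻¹))) * ((q-q⁻¹)*η*((A^2)^(s+1+1) - (A^2)^(s+1))
            + (q-q⁻¹)*(η-η⁻¹)*(A^2)^(1+s)) := by
      rw [one_div_mul_eq_div, div_mul_eq_mul_div,
        div_eq_div_iff (mul_ne_zero hAA hηη) (mul_ne_zero hqq hηη)]
      field_simp
      ring
    linear_combination IH + hstep

lemma coreFrac2 (A q η W : ℂ) (hA : A ≠ 0) (hq : q ≠ 0) (hη : η ≠ 0)
    (hAA : A - A⁻¹ ≠ 0) (hqq : q - q⁻¹ ≠ 0) (hηη : η - η⁻¹ ≠ 0)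
    (hW : W = (A^2)⁻¹) (s : ℕ) :
    (A*η - A⁻¹*η⁻¹)/((A-A⁻¹)*(η-η⁻¹)) * W^(s+1) - (A*q - A⁻¹*q⁻¹)/((A-A⁻¹)*(q-q⁻¹))
    = (1/((q-q⁻¹)*(η-η⁻¹))) * ( -(η-η⁻¹)*q + (q-q⁻¹)*η⁻¹*W^(s+1)
        - (q-q⁻¹)*(η-η⁻¹) * ∑ t ∈ Finset.range s, W^(1+t) ) := by
  have hA1 : A * A⁻¹ = 1 := mul_inv_cancel₀ hA
  have hq1 : q * q⁻¹ = 1 := mul_inv_cancel₀ hq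
  have hh1 : η * η⁻¹ = 1 := mul_inv_cancel₀ hη
  induction s with
  | zero =>
    rw [Finset.sum_range_zero, hW, one_div_mul_eq_div, div_mul_eq_mul_div,
      div_sub_div _ _ (mul_ne_zero hAA hηη) (mul_ne_zero hAA hqq),
      div_eq_div_iff (mul_ne_zero (mul_ne_zero hAA hηη) (mul_ne_zero hAA hqq)) (mul_ne_zero hqq hηη)]
    linear_combination ((-1:ℂ)*A⁻¹^2*q⁻¹^2*η⁻¹^2 + (2:ℂ)*A⁻¹^2*q⁻¹^2*η*η⁻¹ + (-1:ℂ)*A⁻¹^2*q⁻¹^2*η^2 + (2:ℂ)*A⁻¹^2*q*q⁻¹*η⁻¹^2 + (-4:ℂ)*A⁻¹^2*q*q⁻¹*η*η⁻¹ + (2:ℂ)*A⁻¹^2*q*q⁻¹*η^2 + (-1:ℂ)*A⁻¹^2*q^2*η⁻¹^2 + (2:ℂ)*A⁻¹^2*q^2*η*η⁻¹ + (-1:ℂ)*A⁻¹^2*q^2*η^2 + A*A⁻¹*q⁻¹^2*η⁻¹^2 + (-2:ℂ)*A*A⁻¹*q⁻¹^2*η*η⁻¹ + A*A⁻¹*q⁻¹^2*η^2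 + (-2:ℂ)*A*A⁻¹*q*q⁻¹*η⁻¹^2 + (4:ℂ)*A*A⁻¹*q*q⁻¹*η*η⁻¹ + (-2:ℂ)*A*A⁻¹*q*q⁻¹*η^2 + A*A⁻¹*q^2*η⁻¹^2 + (-2:ℂ)*A*A⁻¹*q^2*η*η⁻¹ + A*A⁻¹*q^2*η^2) * hA1
  | succ s IH =>
    rw [Finset.sum_range_succ]
    have hstep0 : (A*η - A⁻¹*η⁻¹)/((A-A⁻¹)*(η-η⁻¹)) * (W - 1)
        = (1/((q-q⁻¹)*(η-η⁻¹))) * ((q-q⁻¹)*η⁻¹*(W - 1) - (q-q⁻¹)*(η-η⁻¹)) := by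
      rw [hW, one_div_mul_eq_div, div_mul_eq_mul_div,
        div_eq_div_iff (mul_ne_zero hAA hηη) (mul_ne_zero hqq hηη)]
      linear_combination ((-1:ℂ)*A⁻¹*q⁻¹*η⁻¹^2 + (2:ℂ)*A⁻¹*q⁻¹*η*η⁻¹ + (-1:ℂ)*A⁻¹*q⁻¹*η^2 + A⁻¹*q*η⁻¹^2 + (-2:ℂ)*A⁻¹*q*η*η⁻¹ + A⁻¹*q*η^2) * hA1
    linear_combination IH + W^(s+1) * hstep0

lemma zp_a (x : ℂ) (hx : x ≠ 0) (e : ℤ) (d : ℕ) : x^(e + 2*(d:ℤ)) = x^e * (x^2)^d := by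
  rw [zpow_add₀ hx]
  congr 1
  rw [show (2*(d:ℤ)) = ((2*d : ℕ) : ℤ) by push_cast; ring, zpow_natCast, pow_mul]

lemma zp_s (x : ℂ) (hx : x ≠ 0) (e : ℤ) (d : ℕ) : x^(e - 2*(d:ℤ)) = x^e * ((x^2)^d)⁻¹ := by
  rw [sub_eq_add_neg, zpow_add₀ hx, zpow_neg]
  congr 2
  rw [show (2*(d:ℤ)) = ((2*d : ℕ) : ℤ) by push_cast; ring, zpow_natCast, pow_mul]

noncomputable def Cco (q η : ℂ) (I J k l : ℕ) : ℂ :=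
  if I = J ∧ J = k ∧ k = l then q * η⁻¹ - q⁻¹ * η
  else if I = k ∧ J = l ∧ I ≠ J then -(η - η⁻¹) * (if (J:ℤ) < (I:ℤ) then q else q⁻¹)
  else if J = k ∧ I = l ∧ I ≠ J then (q - q⁻¹) * (if (I:ℤ) < (J:ℤ) then η else η⁻¹)
  else if (I:ℤ) + (J:ℤ) = (k:ℤ) + (l:ℤ) ∧ min (I:ℤ) (J:ℤ) < (k:ℤ) ∧ (k:ℤ) < max (I:ℤ) (J:ℤ) then
    (if (I:ℤ) < (J:ℤ) then 1 else -1) * (q - q⁻¹) * (η - η⁻¹)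
  else 0

/-- The full ℕ-indexed summand. -/
noncomputable def Tm (n : ℕ) (D U V q η ζ γ : ℂ) (I J k l : ℕ) : ℂ :=
  D / ((q - q⁻¹) * (η - η⁻¹)) * ζ^(2*((I:ℤ) - (k:ℤ))) * γ^(2*((J:ℤ) - (k:ℤ))) *
    Cco q η I J k l * U^(2*(k:ℤ) - (n:ℤ) + 1) * V^(2*(l:ℤ) - (n:ℤ) + 1)

lemma Tm_zero (n : ℕ) (D U V q η ζ γ : ℂ) (I J k l : ℕ)
    (h1 : ¬(I = J ∧ J = k ∧ k = l)) (h2 : ¬(I = k ∧ J = l ∧ I ≠ J))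
    (h3 : ¬(J = k ∧ I = l ∧ I ≠ J))
    (h4 : ¬((I:ℤ) + (J:ℤ) = (k:ℤ) + (l:ℤ) ∧ min (I:ℤ) (J:ℤ) < (k:ℤ) ∧ (k:ℤ) < max (I:ℤ) (J:ℤ))) :
    Tm n D U V q η ζ γ I J k l = 0 := by
  rw [Tm, Cco, if_neg h1, if_neg h2, if_neg h3, if_neg h4]
  ring

lemma mono1' (n : ℕ) (U V ζ γ : ℂ) (hU : U ≠ 0) (hV : V ≠ 0) (hζ : ζ ≠ 0) (hγ : γ ≠ 0)
    (I J k l d : ℕ) (hk : k = I + d) (hl : l + d = J) :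
    ζ^(2*((I:ℤ) - (k:ℤ))) * γ^(2*((J:ℤ) - (k:ℤ))) *
      U^(2*(k:ℤ) - (n:ℤ) + 1) * V^(2*(l:ℤ) - (n:ℤ) + 1)
    = γ^(2*((J:ℤ) - (I:ℤ))) * U^(2*(I:ℤ) - (n:ℤ) + 1) * V^(2*(J:ℤ) - (n:ℤ) + 1) *
      ((U*V⁻¹*ζ⁻¹*γ⁻¹)^2)^d := by
  have e1 : (2*((I:ℤ) - (k:ℤ))) = 0 - 2*(d:ℤ) := by omega
  have e2 : (2*((J:ℤ) - (k:ℤ))) = 2*((J:ℤ) - (I:ℤ)) - 2*(d:ℤ) := by omega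
  have e3 : (2*(k:ℤ) - (n:ℤ) + 1) = (2*(I:ℤ) - (n:ℤ) + 1) + 2*(d:ℤ) := by omega
  have e4 : (2*(l:ℤ) - (n:ℤ) + 1) = (2*(J:ℤ) - (n:ℤ) + 1) - 2*(d:ℤ) := by omega
  rw [e1, e2, e3, e4, zp_s ζ hζ 0 d, zp_s γ hγ _ d, zp_a U hU _ d, zp_s V hV _ d, zpow_zero]
  ring

lemma mono2' (n : ℕ) (U V ζ γ : ℂ) (hU : U ≠ 0) (hV : V ≠ 0) (hζ : ζ ≠ 0) (hγ : γ ≠ 0)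
    (I J k l d : ℕ) (hk : k + d = I) (hl : l = J + d) :
    ζ^(2*((I:ℤ) - (k:ℤ))) * γ^(2*((J:ℤ) - (k:ℤ))) *
      U^(2*(k:ℤ) - (n:ℤ) + 1) * V^(2*(l:ℤ) - (n:ℤ) + 1)
    = γ^(2*((J:ℤ) - (I:ℤ))) * U^(2*(I:ℤ) - (n:ℤ) + 1) * V^(2*(J:ℤ) - (n:ℤ) + 1) *
      (((U*V⁻¹*ζ⁻¹*γ⁻¹)^2)⁻¹)^d := by
  have e1 : (2*((I:ℤ) - (k:ℤ))) = 0 + 2*(d:ℤ) := by omega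
  have e2 : (2*((J:ℤ) - (k:ℤ))) = 2*((J:ℤ) - (I:ℤ)) + 2*(d:ℤ) := by omega
  have e3 : (2*(k:ℤ) - (n:ℤ) + 1) = (2*(I:ℤ) - (n:ℤ) + 1) - 2*(d:ℤ) := by omega
  have e4 : (2*(l:ℤ) - (n:ℤ) + 1) = (2*(J:ℤ) - (n:ℤ) + 1) + 2*(d:ℤ) := by omega
  rw [e1, e2, e3, e4, zp_a ζ hζ 0 d, zp_a γ hγ _ d, zp_s U hU _ d, zp_a V hV _ d, zpow_zero]
  simp only [mul_pow, mul_inv, inv_inv, inv_pow]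
  ring

lemma mz (x y w : ℂ) (hw : w ≠ 0) (e : ℤ) :
    (x*w)^e * (y*w⁻¹)^e = x^e * y^e := by
  rw [mul_zpow, mul_zpow, inv_zpow]
  have h1 := zpow_ne_zero e hw
  field_simp

lemma mz' (x y w : ℂ) (hw : w ≠ 0) (e : ℤ) :
    (x*w⁻¹)^e * (y*w)^e = x^e * y^e := by
  rw [mul_zpow, mul_zpow, inv_zpow]
  have h1 := zpow_ne_zero e hw
  field_simp

lemma master (n I J : ℕ) (hI : I < n) (hJ : J < n) (D U V q η ζ γ : ℂ)
    (hU : U ≠ 0) (hV : V ≠ 0) (hq : q ≠ 0) (hη : η ≠ 0) (hζ : ζ ≠ 0) (hγ : γ ≠ 0)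
    (hqq : q - q⁻¹ ≠ 0) (hηη : η - η⁻¹ ≠ 0)
    (hAA : U*V⁻¹*ζ⁻¹*γ⁻¹ - (U*V⁻¹*ζ⁻¹*γ⁻¹)⁻¹ ≠ 0) :
    D*((U*V⁻¹*ζ⁻¹*γ⁻¹)*η - (U*V⁻¹*ζ⁻¹*γ⁻¹)⁻¹*η⁻¹)/((U*V⁻¹*ζ⁻¹*γ⁻¹ - (U*V⁻¹*ζ⁻¹*γ⁻¹)⁻¹)*(η-η⁻¹))
      * ((V*ζ)^(2*(I:ℤ) - (n:ℤ) + 1) * (U*ζ⁻¹)^(2*(J:ℤ) - (n:ℤ) + 1))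
    - D*((U*V⁻¹*ζ⁻¹*γ⁻¹)*q - (U*V⁻¹*ζ⁻¹*γ⁻¹)⁻¹*q⁻¹)/((U*V⁻¹*ζ⁻¹*γ⁻¹ - (U*V⁻¹*ζ⁻¹*γ⁻¹)⁻¹)*(q-q⁻¹))
      * ((U*γ⁻¹)^(2*(I:ℤ) - (n:ℤ) + 1) * (V*γ)^(2*(J:ℤ) - (n:ℤ) + 1))
    = ∑ k ∈ Finset.range n, ∑ l ∈ Finset.range n, Tm n D U V q η ζ γ I J k l := by
  have hA : U*V⁻¹*ζ⁻¹*γ⁻¹ ≠ 0 :=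
    mul_ne_zero (mul_ne_zero (mul_ne_zero hU (inv_ne_zero hV)) (inv_ne_zero hζ)) (inv_ne_zero hγ)
  have hγ2 : γ^(2*((J:ℤ)-(I:ℤ))) = γ^(2*(J:ℤ)-(n:ℤ)+1) * (γ^(2*(I:ℤ)-(n:ℤ)+1))⁻¹ := by
    rw [← div_eq_mul_inv, ← zpow_sub₀ hγ]; congr 1; ring
  have L2 : (U*γ⁻¹)^(2*(I:ℤ)-(n:ℤ)+1) * (V*γ)^(2*(J:ℤ)-(n:ℤ)+1)
      = γ^(2*((J:ℤ)-(I:ℤ))) * U^(2*(I:ℤ)-(n:ℤ)+1) * V^(2*(J:ℤ)-(n:ℤ)+1) := by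
    rw [mul_zpow, mul_zpow, inv_zpow, hγ2]; ring
  rcases Nat.lt_trichotomy I J with hlt | heq | hgt
  · -- case I < J
    obtain ⟨s, hs⟩ : ∃ s, J = I + (s+1) := ⟨J - I - 1, by omega⟩
    have hζ2 : ζ^(2*((I:ℤ)-(J:ℤ))) = ζ^(2*(I:ℤ)-(n:ℤ)+1) * (ζ^(2*(J:ℤ)-(n:ℤ)+1))⁻¹ := by
      rw [← div_eq_mul_inv, ← zpow_sub₀ hζ]; congr 1; ring
    have hvanlt : ∀ k l : ℕ, ¬(k = I ∧ l = J) → ¬(k = J ∧ l = I) →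
        ¬((I:ℤ)+(J:ℤ) = (k:ℤ)+(l:ℤ) ∧ I < k ∧ k < J) → Tm n D U V q η ζ γ I J k l = 0 := by
      intro k l h1 h2 h3
      apply Tm_zero
      · omega
      · intro hc; exact h1 ⟨hc.1.symm, hc.2.1.symm⟩
      · intro hc; exact h2 ⟨hc.1.symm, hc.2.1.symm⟩
      · intro hc; exact h3 ⟨hc.1, by omega, by omega⟩
    have hinner : ∀ k ∈ Finset.range n, ∑ l ∈ Finset.range n, Tm n D U V q η ζ γ I J k l
        = (if k = I then Tm n D U V q η ζ γ I J I J else 0)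
          + (if k = J then Tm n D U V q η ζ γ I J J I else 0)
          + (if I < k ∧ k < J then Tm n D U V q η ζ γ I J k (I+J-k) else 0) := by
      intro k hk
      by_cases h1 : k = I
      · subst h1
        rw [if_pos rfl, if_neg (by omega), if_neg (by omega), add_zero, add_zero]
        exact Finset.sum_eq_single_of_mem J (Finset.mem_range.mpr hJ)
          (fun l _ hl => hvanlt _ _ (fun hc => hl hc.2) (by omega) (by omega))
      · by_cases h2 : k = J
        · subst h2
          rw [if_neg h1, if_pos rfl, if_neg (by omega), zero_add, add_zero]
          exact Finset.sum_eq_single_of_mem I (Finset.mem_range.mpr hI)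
            (fun l _ hl => hvanlt _ _ (by omega) (fun hc => hl hc.2) (by omega))
        · by_cases h3 : I < k ∧ k < J
          · rw [if_neg h1, if_neg h2, if_pos h3, zero_add, zero_add]
            exact Finset.sum_eq_single_of_mem (I+J-k) (Finset.mem_range.mpr (by omega))
              (fun l _ hl => hvanlt _ _ (by omega) (by omega) (fun hc => hl (by omega)))
          · rw [if_neg h1, if_neg h2, if_neg h3]
            norm_num
            exact Finset.sum_eq_zero (fun l _ => hvanlt _ _ (fun hc => h1 hc.1)
              (fun hc => h2 hc.1) (fun hc => h3 ⟨by omega, by omega⟩))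
    rw [Finset.sum_congr rfl hinner, Finset.sum_add_distrib, Finset.sum_add_distrib,
      Finset.sum_ite_eq' (Finset.range n) I, Finset.sum_ite_eq' (Finset.range n) J,
      if_pos (Finset.mem_range.mpr hI), if_pos (Finset.mem_range.mpr hJ)]
    have hfil : ∑ k ∈ Finset.range n, (if I < k ∧ k < J then Tm n D U V q η ζ γ I J k (I+J-k) else 0)
        = ∑ t ∈ Finset.range s, Tm n D U V q η ζ γ I J (I+1+t) (I+J-(I+1+t)) := by
      rw [← Finset.sum_filter]
      have hset : (Finset.range n).filter (fun k => I < k ∧ k < J) = Finset.Ioo I J := by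
        ext k; simp only [Finset.mem_filter, Finset.mem_range, Finset.mem_Ioo]; omega
      rw [hset, ← Finset.Ico_add_one_left_eq_Ioo, Finset.sum_Ico_eq_sum_range]
      have hrange : J - (I+1) = s := by omega
      rw [hrange]
    rw [hfil]
    have hTIJ : Tm n D U V q η ζ γ I J I J
        = D/((q-q⁻¹)*(η-η⁻¹)) * (-(η-η⁻¹)*q⁻¹) * (γ^(2*((J:ℤ)-(I:ℤ))) *
            U^(2*(I:ℤ)-(n:ℤ)+1) * V^(2*(J:ℤ)-(n:ℤ)+1) * ((U*V⁻¹*ζ⁻¹*γ⁻¹)^2)^0) := by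
      have hC : Cco q η I J I J = -(η-η⁻¹)*q⁻¹ := by
        rw [Cco, if_neg (by omega), if_pos ⟨rfl, rfl, by omega⟩, if_neg (by omega)]
      have hM := mono1' n U V ζ γ hU hV hζ hγ I J I J 0 (by omega) (by omega)
      rw [Tm, hC]
      linear_combination (D/((q-q⁻¹)*(η-η⁻¹)) * (-(η-η⁻¹)*q⁻¹)) * hM
    have hTJI : Tm n D U V q η ζ γ I J J I
        = D/((q-q⁻¹)*(η-η⁻¹)) * ((q-q⁻¹)*η) * (γ^(2*((J:ℤ)-(I:ℤ))) *
            U^(2*(I:ℤ)-(n:ℤ)+1) * V^(2*(J:ℤ)-(n:ℤ)+1) * ((U*V⁻¹*ζ⁻¹*γ⁻¹)^2)^(s+1)) := by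
      have hC : Cco q η I J J I = (q-q⁻¹)*η := by
        rw [Cco, if_neg (by omega), if_neg (by omega), if_pos ⟨rfl, rfl, by omega⟩,
          if_pos (by omega)]
      have hM := mono1' n U V ζ γ hU hV hζ hγ I J J I (s+1) (by omega) (by omega)
      rw [Tm, hC]
      linear_combination (D/((q-q⁻¹)*(η-η⁻¹)) * ((q-q⁻¹)*η)) * hM
    have hmid : ∀ t ∈ Finset.range s, Tm n D U V q η ζ γ I J (I+1+t) (I+J-(I+1+t))
        = (D/((q-q⁻¹)*(η-η⁻¹)) * ((q-q⁻¹)*(η-η⁻¹)) * (γ^(2*((J:ℤ)-(I:ℤ))) *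
            U^(2*(I:ℤ)-(n:ℤ)+1) * V^(2*(J:ℤ)-(n:ℤ)+1))) * ((U*V⁻¹*ζ⁻¹*γ⁻¹)^2)^(1+t) := by
      intro t ht
      rw [Finset.mem_range] at ht
      have hC : Cco q η I J (I+1+t) (I+J-(I+1+t)) = (q-q⁻¹)*(η-η⁻¹) := by
        rw [Cco, if_neg (by omega), if_neg (by omega), if_neg (by omega),
          if_pos (by omega), if_pos (by omega)]
        ring
      have hM := mono1' n U V ζ γ hU hV hζ hγ I J (I+1+t) (I+J-(I+1+t)) (1+t) (by omega) (by omega)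
      rw [Tm, hC]
      linear_combination (D/((q-q⁻¹)*(η-η⁻¹)) * ((q-q⁻¹)*(η-η⁻¹))) * hM
    rw [hTIJ, hTJI, Finset.sum_congr rfl hmid, ← Finset.mul_sum]
    have L1 : (V*ζ)^(2*(I:ℤ)-(n:ℤ)+1) * (U*ζ⁻¹)^(2*(J:ℤ)-(n:ℤ)+1)
        = γ^(2*((J:ℤ)-(I:ℤ))) * U^(2*(I:ℤ)-(n:ℤ)+1) * V^(2*(J:ℤ)-(n:ℤ)+1) *
          ((U*V⁻¹*ζ⁻¹*γ⁻¹)^2)^(s+1) := by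
      have hM := mono1' n U V ζ γ hU hV hζ hγ I J J I (s+1) (by omega) (by omega)
      have hg0 : γ^(2*((J:ℤ)-(J:ℤ))) = 1 := by
        rw [show (2*((J:ℤ)-(J:ℤ))) = 0 by ring, zpow_zero]
      rw [hζ2, hg0] at hM
      rw [mul_zpow V ζ, mul_zpow U ζ⁻¹, inv_zpow]
      linear_combination hM
    rw [L1, L2]
    linear_combination (D * (γ^(2*((J:ℤ)-(I:ℤ))) * U^(2*(I:ℤ)-(n:ℤ)+1) * V^(2*(J:ℤ)-(n:ℤ)+1)))
      * (coreFrac (U*V⁻¹*ζ⁻¹*γ⁻¹) q η hA hq hη hAA hqq hηη s)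
  · -- case I = J
    subst heq
    -- collapse the double sum to the single diagonal term
    have hvan : ∀ k l : ℕ, ¬(k = I ∧ l = I) → Tm n D U V q η ζ γ I I k l = 0 := by
      intro k l h
      apply Tm_zero <;> intro hc
      · exact h ⟨hc.2.1.symm, by omega⟩
      · exact hc.2.2 rfl
      · exact hc.2.2 rfl
      · omega
    have hrhs : ∑ k ∈ Finset.range n, ∑ l ∈ Finset.range n, Tm n D U V q η ζ γ I I k l
        = Tm n D U V q η ζ γ I I I I := by
      rw [Finset.sum_eq_single_of_mem I (Finset.mem_range.mpr hI)]
      · exact Finset.sum_eq_single_of_mem I (Finset.mem_range.mpr hI)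
          (fun l _ hl => hvan I l (fun hc => hl hc.2))
      · intro k _ hk
        exact Finset.sum_eq_zero (fun l _ => hvan k l (fun hc => hk hc.1))
    rw [hrhs]
    have hC : Cco q η I I I I = q * η⁻¹ - q⁻¹ * η := by
      rw [Cco, if_pos ⟨rfl, rfl, rfl⟩]
    have hz0 : ζ^(2*((I:ℤ)-(I:ℤ))) = 1 := by
      rw [show (2*((I:ℤ)-(I:ℤ))) = 0 by ring, zpow_zero]
    have hg0 : γ^(2*((I:ℤ)-(I:ℤ))) = 1 := by
      rw [show (2*((I:ℤ)-(I:ℤ))) = 0 by ring, zpow_zero]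
    rw [Tm, hC, hz0, hg0, mz V U ζ hζ _, mz' U V γ hγ _]
    have base : D*((U*V⁻¹*ζ⁻¹*γ⁻¹)*η - (U*V⁻¹*ζ⁻¹*γ⁻¹)⁻¹*η⁻¹)/((U*V⁻¹*ζ⁻¹*γ⁻¹ - (U*V⁻¹*ζ⁻¹*γ⁻¹)⁻¹)*(η-η⁻¹))
        - D*((U*V⁻¹*ζ⁻¹*γ⁻¹)*q - (U*V⁻¹*ζ⁻¹*γ⁻¹)⁻¹*q⁻¹)/((U*V⁻¹*ζ⁻¹*γ⁻¹ - (U*V⁻¹*ζ⁻¹*γ⁻¹)⁻¹)*(q-q⁻¹))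
        = D/((q-q⁻¹)*(η-η⁻¹)) * (q*η⁻¹ - q⁻¹*η) := by
      have hA1 : (U*V⁻¹*ζ⁻¹*γ⁻¹) * (U*V⁻¹*ζ⁻¹*γ⁻¹)⁻¹ = 1 := mul_inv_cancel₀ hA
      have hq1 : q * q⁻¹ = 1 := mul_inv_cancel₀ hq
      have hh1 : η * η⁻¹ = 1 := mul_inv_cancel₀ hη
      rw [div_sub_div _ _ (mul_ne_zero hAA hηη) (mul_ne_zero hAA hqq), div_mul_eq_mul_div,
        div_eq_div_iff (mul_ne_zero (mul_ne_zero hAA hηη) (mul_ne_zero hAA hqq)) (mul_ne_zero hqq hηη)]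
      ring
    linear_combination (U^(2*(I:ℤ)-(n:ℤ)+1) * V^(2*(I:ℤ)-(n:ℤ)+1)) * base
  · -- case J < I
    obtain ⟨s, hs⟩ : ∃ s, I = J + (s+1) := ⟨I - J - 1, by omega⟩
    have hζ2 : ζ^(2*((I:ℤ)-(J:ℤ))) = ζ^(2*(I:ℤ)-(n:ℤ)+1) * (ζ^(2*(J:ℤ)-(n:ℤ)+1))⁻¹ := by
      rw [← div_eq_mul_inv, ← zpow_sub₀ hζ]; congr 1; ring
    have hvangt : ∀ k l : ℕ, ¬(k = I ∧ l = J) → ¬(k = J ∧ l = I) →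
        ¬((I:ℤ)+(J:ℤ) = (k:ℤ)+(l:ℤ) ∧ J < k ∧ k < I) → Tm n D U V q η ζ γ I J k l = 0 := by
      intro k l h1 h2 h3
      apply Tm_zero
      · omega
      · intro hc; exact h1 ⟨hc.1.symm, hc.2.1.symm⟩
      · intro hc; exact h2 ⟨hc.1.symm, hc.2.1.symm⟩
      · intro hc; exact h3 ⟨hc.1, by omega, by omega⟩
    have hinner : ∀ k ∈ Finset.range n, ∑ l ∈ Finset.range n, Tm n D U V q η ζ γ I J k l
        = (if k = I then Tm n D U V q η ζ γ I J I J else 0)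
          + (if k = J then Tm n D U V q η ζ γ I J J I else 0)
          + (if J < k ∧ k < I then Tm n D U V q η ζ γ I J k (I+J-k) else 0) := by
      intro k hk
      by_cases h1 : k = I
      · subst h1
        rw [if_pos rfl, if_neg (by omega), if_neg (by omega), add_zero, add_zero]
        exact Finset.sum_eq_single_of_mem J (Finset.mem_range.mpr hJ)
          (fun l _ hl => hvangt _ _ (fun hc => hl hc.2) (by omega) (by omega))
      · by_cases h2 : k = J
        · subst h2
          rw [if_neg h1, if_pos rfl, if_neg (by omega), zero_add, add_zero]
          exact Finset.sum_eq_single_of_mem I (Finset.mem_range.mpr hI)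
            (fun l _ hl => hvangt _ _ (by omega) (fun hc => hl hc.2) (by omega))
        · by_cases h3 : J < k ∧ k < I
          · rw [if_neg h1, if_neg h2, if_pos h3, zero_add, zero_add]
            exact Finset.sum_eq_single_of_mem (I+J-k) (Finset.mem_range.mpr (by omega))
              (fun l _ hl => hvangt _ _ (by omega) (by omega) (fun hc => hl (by omega)))
          · rw [if_neg h1, if_neg h2, if_neg h3]
            norm_num
            exact Finset.sum_eq_zero (fun l _ => hvangt _ _ (fun hc => h1 hc.1)
              (fun hc => h2 hc.1) (fun hc => h3 ⟨by omega, by omega⟩))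
    rw [Finset.sum_congr rfl hinner, Finset.sum_add_distrib, Finset.sum_add_distrib,
      Finset.sum_ite_eq' (Finset.range n) I, Finset.sum_ite_eq' (Finset.range n) J,
      if_pos (Finset.mem_range.mpr hI), if_pos (Finset.mem_range.mpr hJ)]
    have hfil : ∑ k ∈ Finset.range n, (if J < k ∧ k < I then Tm n D U V q η ζ γ I J k (I+J-k) else 0)
        = ∑ t ∈ Finset.range s, Tm n D U V q η ζ γ I J (J+1+t) (I+J-(J+1+t)) := by
      rw [← Finset.sum_filter]
      have hset : (Finset.range n).filter (fun k => J < k ∧ k < I) = Finset.Ioo J I := by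
        ext k; simp only [Finset.mem_filter, Finset.mem_range, Finset.mem_Ioo]; omega
      rw [hset, ← Finset.Ico_add_one_left_eq_Ioo, Finset.sum_Ico_eq_sum_range]
      have hrange : I - (J+1) = s := by omega
      rw [hrange]
    rw [hfil]
    have hTIJ : Tm n D U V q η ζ γ I J I J
        = D/((q-q⁻¹)*(η-η⁻¹)) * (-(η-η⁻¹)*q) * (γ^(2*((J:ℤ)-(I:ℤ))) *
            U^(2*(I:ℤ)-(n:ℤ)+1) * V^(2*(J:ℤ)-(n:ℤ)+1) * (((U*V⁻¹*ζ⁻¹*γ⁻¹)^2)⁻¹)^0) := by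
      have hC : Cco q η I J I J = -(η-η⁻¹)*q := by
        rw [Cco, if_neg (by omega), if_pos ⟨rfl, rfl, by omega⟩, if_pos (by omega)]
      have hM := mono2' n U V ζ γ hU hV hζ hγ I J I J 0 (by omega) (by omega)
      rw [Tm, hC]
      linear_combination (D/((q-q⁻¹)*(η-η⁻¹)) * (-(η-η⁻¹)*q)) * hM
    have hTJI : Tm n D U V q η ζ γ I J J I
        = D/((q-q⁻¹)*(η-η⁻¹)) * ((q-q⁻¹)*η⁻¹) * (γ^(2*((J:ℤ)-(I:ℤ))) *
            U^(2*(I:ℤ)-(n:ℤ)+1) * V^(2*(J:ℤ)-(n:ℤ)+1) * (((U*V⁻¹*ζ⁻¹*γ⁻¹)^2)⁻¹)^(s+1)) := by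
      have hC : Cco q η I J J I = (q-q⁻¹)*η⁻¹ := by
        rw [Cco, if_neg (by omega), if_neg (by omega), if_pos ⟨rfl, rfl, by omega⟩,
          if_neg (by omega)]
      have hM := mono2' n U V ζ γ hU hV hζ hγ I J J I (s+1) (by omega) (by omega)
      rw [Tm, hC]
      linear_combination (D/((q-q⁻¹)*(η-η⁻¹)) * ((q-q⁻¹)*η⁻¹)) * hM
    have hmid : ∀ t ∈ Finset.range s, Tm n D U V q η ζ γ I J (J+1+t) (I+J-(J+1+t))
        = (D/((q-q⁻¹)*(η-η⁻¹)) * (-(q-q⁻¹)*(η-η⁻¹)) * (γ^(2*((J:ℤ)-(I:ℤ))) *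
            U^(2*(I:ℤ)-(n:ℤ)+1) * V^(2*(J:ℤ)-(n:ℤ)+1))) * (((U*V⁻¹*ζ⁻¹*γ⁻¹)^2)⁻¹)^(s-t) := by
      intro t ht
      rw [Finset.mem_range] at ht
      have hC : Cco q η I J (J+1+t) (I+J-(J+1+t)) = -((q-q⁻¹)*(η-η⁻¹)) := by
        rw [Cco, if_neg (by omega), if_neg (by omega), if_neg (by omega),
          if_pos (by omega), if_neg (by omega)]
        ring
      have hM := mono2' n U V ζ γ hU hV hζ hγ I J (J+1+t) (I+J-(J+1+t)) (s-t) (by omega) (by omega)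
      rw [Tm, hC]
      linear_combination (D/((q-q⁻¹)*(η-η⁻¹)) * (-(q-q⁻¹)*(η-η⁻¹))) * hM
    have hrefl : ∑ t ∈ Finset.range s,
        ((D/((q-q⁻¹)*(η-η⁻¹)) * (-(q-q⁻¹)*(η-η⁻¹)) * (γ^(2*((J:ℤ)-(I:ℤ))) *
            U^(2*(I:ℤ)-(n:ℤ)+1) * V^(2*(J:ℤ)-(n:ℤ)+1))) * (((U*V⁻¹*ζ⁻¹*γ⁻¹)^2)⁻¹)^(s-t))
        = ∑ t ∈ Finset.range s,
        ((D/((q-q⁻¹)*(η-η⁻¹)) * (-(q-q⁻¹)*(η-η⁻¹)) * (γ^(2*((J:ℤ)-(I:ℤ))) *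
            U^(2*(I:ℤ)-(n:ℤ)+1) * V^(2*(J:ℤ)-(n:ℤ)+1))) * (((U*V⁻¹*ζ⁻¹*γ⁻¹)^2)⁻¹)^(1+t)) := by
      rw [← Finset.sum_range_reflect (fun t => (D/((q-q⁻¹)*(η-η⁻¹)) * (-(q-q⁻¹)*(η-η⁻¹)) *
        (γ^(2*((J:ℤ)-(I:ℤ))) * U^(2*(I:ℤ)-(n:ℤ)+1) * V^(2*(J:ℤ)-(n:ℤ)+1))) *
        (((U*V⁻¹*ζ⁻¹*γ⁻¹)^2)⁻¹)^(1+t)) s]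
      refine Finset.sum_congr rfl (fun t ht => ?_)
      rw [Finset.mem_range] at ht
      congr 1
      congr 1
      omega
    rw [hTIJ, hTJI, Finset.sum_congr rfl hmid, hrefl, ← Finset.mul_sum]
    have L1 : (V*ζ)^(2*(I:ℤ)-(n:ℤ)+1) * (U*ζ⁻¹)^(2*(J:ℤ)-(n:ℤ)+1)
        = γ^(2*((J:ℤ)-(I:ℤ))) * U^(2*(I:ℤ)-(n:ℤ)+1) * V^(2*(J:ℤ)-(n:ℤ)+1) *
          (((U*V⁻¹*ζ⁻¹*γ⁻¹)^2)⁻¹)^(s+1) := by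
      have hM := mono2' n U V ζ γ hU hV hζ hγ I J J I (s+1) (by omega) (by omega)
      have hg0 : γ^(2*((J:ℤ)-(J:ℤ))) = 1 := by
        rw [show (2*((J:ℤ)-(J:ℤ))) = 0 by ring, zpow_zero]
      rw [hζ2, hg0] at hM
      rw [mul_zpow V ζ, mul_zpow U ζ⁻¹, inv_zpow]
      linear_combination hM
    rw [L1, L2]
    linear_combination (D * (γ^(2*((J:ℤ)-(I:ℤ))) * U^(2*(I:ℤ)-(n:ℤ)+1) * V^(2*(J:ℤ)-(n:ℤ)+1)))
      * (coreFrac2 (U*V⁻¹*ζ⁻¹*γ⁻¹) q η (((U*V⁻¹*ζ⁻¹*γ⁻¹)^2)⁻¹) hA hq hη hAA hqq hηη rfl s)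


lemma summand_eq (n : ℕ) (α β lam κ z₁ z₂ : ℂ) (i j k l : Fin n) :
    cgTwCoeff (Ee κ) (Ee lam) (Ee (2*α*lam)) (Ee (2*β)) i j k l *
      phiT n (k:ℤ) z₁ * phiT n (l:ℤ) z₂
    = Tm n (2*(Real.pi:ℂ)*Complex.I) (Ee z₁) (Ee z₂) (Ee κ) (Ee lam)
        (Ee (2*α*lam)) (Ee (2*β)) (i:ℕ) (j:ℕ) (k:ℕ) (l:ℕ) := by
  rw [cgTwCoeff, Tm, Cco, phiT_eq, phiT_eq]
  simp only [ne_eq, Fin.ext_iff]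
  try ring

/-- The twisted trigonometric Shibukawa–Ueno operator preserves `V^t_n ⊗ V^t_n`,
with matrix coefficients the twisted affinized Cremmer–Gervais `R`-matrix. -/
theorem trig_SU_on_Vt (n : ℕ) (hn : 1 ≤ n) (α β lam κ : ℂ)
    (hlam : Complex.sin ((Real.pi : ℂ) * lam) ≠ 0)
    (hκ : Complex.sin ((Real.pi : ℂ) * κ) ≠ 0)
    (i j : Fin n) (z₁ z₂ : ℂ)
    (hz : Complex.sin ((Real.pi : ℂ) * (z₁ - z₂ - 2 * (α * lam + β))) ≠ 0) :
    Gtrig (z₁ - z₂ - 2 * (α * lam + β)) lam *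
        phiT n (i : ℤ) (z₂ + 2 * α * lam) * phiT n (j : ℤ) (z₁ - 2 * α * lam) -
      Gtrig (z₁ - z₂ - 2 * (α * lam + β)) κ *
        phiT n (i : ℤ) (z₁ - 2 * β) * phiT n (j : ℤ) (z₂ + 2 * β) =
    ∑ k : Fin n, ∑ l : Fin n,
      cgTwCoeff (Complex.exp ((Real.pi : ℂ) * Complex.I * κ))
          (Complex.exp ((Real.pi : ℂ) * Complex.I * lam))
          (Complex.exp (2 * (Real.pi : ℂ) * Complex.I * α * lam))
          (Complex.exp (2 * (Real.pi : ℂ) * Complex.I * β)) i j k l *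
        phiT n (k : ℤ) z₁ * phiT n (l : ℤ) z₂ := by
  have hζe : Complex.exp (2 * (Real.pi:ℂ) * Complex.I * α * lam) = Ee (2*α*lam) := by
    rw [Ee]; congr 1; ring
  have hγe : Complex.exp (2 * (Real.pi:ℂ) * Complex.I * β) = Ee (2*β) := by
    rw [Ee]; congr 1; ring
  have hqe : Complex.exp ((Real.pi:ℂ) * Complex.I * κ) = Ee κ := rfl
  have hηe : Complex.exp ((Real.pi:ℂ) * Complex.I * lam) = Ee lam := rfl
  rw [hζe, hγe, hqe, hηe]
  have hEZ : Ee (z₁ - z₂ - 2 * (α * lam + β))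
      = Ee z₁ * (Ee z₂)⁻¹ * (Ee (2*α*lam))⁻¹ * (Ee (2*β))⁻¹ := by
    rw [show z₁ - z₂ - 2 * (α * lam + β) = z₁ - z₂ - 2*α*lam - 2*β by ring,
      Ee_sub, Ee_sub, Ee_sub]
  have hU : Ee z₁ ≠ 0 := Ee_ne _
  have hV : Ee z₂ ≠ 0 := Ee_ne _
  have hq0 : Ee κ ≠ 0 := Ee_ne _
  have hη0 : Ee lam ≠ 0 := Ee_ne _
  have hζ0 : Ee (2*α*lam) ≠ 0 := Ee_ne _
  have hγ0 : Ee (2*β) ≠ 0 := Ee_ne _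
  have hqq : Ee κ - (Ee κ)⁻¹ ≠ 0 := sin_ne_imp κ hκ
  have hηη : Ee lam - (Ee lam)⁻¹ ≠ 0 := sin_ne_imp lam hlam
  have hAA : Ee z₁ * (Ee z₂)⁻¹ * (Ee (2*α*lam))⁻¹ * (Ee (2*β))⁻¹ -
      (Ee z₁ * (Ee z₂)⁻¹ * (Ee (2*α*lam))⁻¹ * (Ee (2*β))⁻¹)⁻¹ ≠ 0 := by
    rw [← hEZ]; exact sin_ne_imp _ hz
  have hsum : (∑ k : Fin n, ∑ l : Fin n,
      cgTwCoeff (Ee κ) (Ee lam) (Ee (2*α*lam)) (Ee (2*β)) i j k l *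
        phiT n (k:ℤ) z₁ * phiT n (l:ℤ) z₂)
      = ∑ k ∈ Finset.range n, ∑ l ∈ Finset.range n,
          Tm n (2*(Real.pi:ℂ)*Complex.I) (Ee z₁) (Ee z₂) (Ee κ) (Ee lam)
            (Ee (2*α*lam)) (Ee (2*β)) (i:ℕ) (j:ℕ) k l := by
    rw [← Fin.sum_univ_eq_sum_range (fun a => ∑ l ∈ Finset.range n,
      Tm n (2*(Real.pi:ℂ)*Complex.I) (Ee z₁) (Ee z₂) (Ee κ) (Ee lam)
        (Ee (2*α*lam)) (Ee (2*β)) (i:ℕ) (j:ℕ) a l) n]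
    refine Finset.sum_congr rfl (fun k _ => ?_)
    rw [← Fin.sum_univ_eq_sum_range (fun b =>
      Tm n (2*(Real.pi:ℂ)*Complex.I) (Ee z₁) (Ee z₂) (Ee κ) (Ee lam)
        (Ee (2*α*lam)) (Ee (2*β)) (i:ℕ) (j:ℕ) (k:ℕ) b) n]
    exact Finset.sum_congr rfl (fun l _ => summand_eq n α β lam κ z₁ z₂ i j k l)
  rw [hsum]
  rw [Gtrig_eq _ lam hz hlam, Gtrig_eq _ κ hz hκ, hEZ]
  rw [phiT_eq n (i:ℤ) (z₂ + 2*α*lam), phiT_eq n (j:ℤ) (z₁ - 2*α*lam),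
    phiT_eq n (i:ℤ) (z₁ - 2*β), phiT_eq n (j:ℤ) (z₂ + 2*β)]
  rw [Ee_add z₂ (2*α*lam), Ee_sub z₁ (2*α*lam), Ee_sub z₁ (2*β), Ee_add z₂ (2*β)]
  have hM := master n (i:ℕ) (j:ℕ) i.isLt j.isLt (2*(Real.pi:ℂ)*Complex.I)
    (Ee z₁) (Ee z₂) (Ee κ) (Ee lam) (Ee (2*α*lam)) (Ee (2*β))
    hU hV hq0 hη0 hζ0 hγ0 hqq hηη hAA
  linear_combination hM
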